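/- Let G be a simple graph on a finite vertex set V and let H ⊆ V be nonempty. If the induced subgraph G[H] has exactly l connected components H^(1),…,H^(l) and each induced subgraph G[H^(j)] is chordal, then Σ_{C} (−1)^{|C|−1} = l, where the sum runs over all nonempty complete subsets C of H. In particular, if l ≥ 2 the sum is not equal to 1. -/

import Mathlib

open Finset

/-- A simple graph is chordal (decomposable) if every cycle of length at least 4
has a chord: two vertices of the cycle that are adjacent in the graph but not
consecutive along the cycle. -/
def IsChordal {α : Type} (G : SimpleGraph α) : Prop :=
  ∀ (v : α) (w : G.Walk v v), w.IsCycle → 4 ≤ w.length →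
    ∃ x y, x ∈ w.support ∧ y ∈ w.support ∧ G.Adj x y ∧ s(x, y) ∉ w.edges

/-- A finset is complete (a clique) if every two distinct vertices in it are adjacent. -/
def IsCompleteSet {α : Type} (G : SimpleGraph α) (C : Finset α) : Prop :=
  ∀ u ∈ C, ∀ v ∈ C, u ≠ v → G.Adj u v

instance {α : Type} [DecidableEq α] (G : SimpleGraph α) [DecidableRel G.Adj]
    (C : Finset α) : Decidable (IsCompleteSet G C) := by
  unfold IsCompleteSet; infer_instance

namespace ChordalAux

open SimpleGraph

variable {α : Type} [DecidableEq α] {Γ : SimpleGraph α}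

/-- Reachability within a vertex finset. -/
def ReachOn (Γ : SimpleGraph α) (B : Finset α) (x y : α) : Prop :=
  ∃ p : Γ.Walk x y, ∀ z ∈ p.support, z ∈ B

/-- Connectivity of the induced subgraph on a finset, phrased in the ambient graph. -/
def ConnOn (Γ : SimpleGraph α) (A : Finset α) : Prop :=
  ∀ x ∈ A, ∀ y ∈ A, ReachOn Γ A x y

/-- Chordality of the induced subgraph on a finset, phrased in the ambient graph. -/
def ChordalOn (Γ : SimpleGraph α) (A : Finset α) : Prop :=
  ∀ (v : α) (w : Γ.Walk v v), w.IsCycle → 4 ≤ w.length → (∀ z ∈ w.support, z ∈ A) →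
    ∃ x y, x ∈ w.support ∧ y ∈ w.support ∧ Γ.Adj x y ∧ s(x, y) ∉ w.edges

lemma ChordalOn.mono {A B : Finset α} (h : ChordalOn Γ A) (hBA : B ⊆ A) : ChordalOn Γ B :=
  fun v w hc hl hsup => h v w hc hl (fun z hz => hBA (hsup z hz))

lemma ReachOn.refl {B : Finset α} {x : α} (hx : x ∈ B) : ReachOn Γ B x x :=
  ⟨Walk.nil, by intro z hz; simp only [Walk.support_nil, List.mem_singleton] at hz; rwa [hz]⟩

lemma ReachOn.symm {B : Finset α} {x y : α} (h : ReachOn Γ B x y) : ReachOn Γ B y x := by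
  obtain ⟨p, hp⟩ := h
  exact ⟨p.reverse, fun z hz => hp z (by rwa [Walk.support_reverse, List.mem_reverse] at hz)⟩

lemma ReachOn.trans {B : Finset α} {x y z : α} (h1 : ReachOn Γ B x y) (h2 : ReachOn Γ B y z) :
    ReachOn Γ B x z := by
  obtain ⟨p, hp⟩ := h1
  obtain ⟨q, hq⟩ := h2
  refine ⟨p.append q, fun w hw => ?_⟩
  rcases (Walk.mem_support_append_iff _ _).mp hw with h | h
  · exact hp w h
  · exact hq w h

lemma exists_min_walk {B : Finset α} {x y : α} (h : ReachOn Γ B x y) :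
    ∃ p : Γ.Walk x y, (∀ z ∈ p.support, z ∈ B) ∧ p.IsPath ∧
      ∀ q : Γ.Walk x y, (∀ z ∈ q.support, z ∈ B) → p.length ≤ q.length := by
  have hne : {n : ℕ | ∃ p : Γ.Walk x y, (∀ z ∈ p.support, z ∈ B) ∧ p.length = n}.Nonempty := by
    obtain ⟨p, hp⟩ := h; exact ⟨p.length, p, hp, rfl⟩
  obtain ⟨p, hpB, hplen⟩ := Nat.sInf_mem hne
  refine ⟨p.bypass, fun z hz => hpB z (p.support_bypass_subset hz), p.bypass_isPath, ?_⟩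
  intro q hq
  calc p.bypass.length ≤ p.length := p.length_bypass_le
    _ ≤ q.length := by rw [hplen]; exact Nat.sInf_le ⟨q, hq, rfl⟩

lemma edge_getVert_succ_mem_edges {x y : α} (p : Γ.Walk x y) :
    ∀ i, i < p.length → s(p.getVert i, p.getVert (i + 1)) ∈ p.edges := by
  induction p with
  | nil => intro i hi; simp at hi
  | cons h q ih =>
    intro i hi
    cases i with
    | zero =>
      rw [Walk.edges_cons, Walk.getVert_cons_succ, Walk.getVert_zero, Walk.getVert_zero]
      exact List.mem_cons_self
    | succ n =>
      rw [Walk.getVert_cons_succ, Walk.getVert_cons_succ, Walk.edges_cons]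
      right
      exact ih n (by rw [Walk.length_cons] at hi; omega)

lemma getVert_length_takeUntil {x y a : α} (p : Γ.Walk x y) (ha : a ∈ p.support) :
    p.getVert (p.takeUntil a ha).length = a := by
  have key : ∀ {u v w : α} (t : Γ.Walk u v) (d : Γ.Walk v w),
      (t.append d).getVert t.length = v := by
    intro u v w t d
    rw [Walk.getVert_append]
    simp
  have h2 := key (p.takeUntil a ha) (p.dropUntil a ha)
  rwa [Walk.take_spec p ha] at h2

lemma length_takeUntil_add {x y a : α} (p : Γ.Walk x y) (ha : a ∈ p.support) :
    (p.takeUntil a ha).length + (p.dropUntil a ha).length = p.length := by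
  have := congrArg Walk.length (Walk.take_spec p ha)
  rwa [Walk.length_append] at this

lemma no_shortcut {B : Finset α} {x y : α} {p : Γ.Walk x y}
    (hpB : ∀ z ∈ p.support, z ∈ B)
    (hmin : ∀ q : Γ.Walk x y, (∀ z ∈ q.support, z ∈ B) → p.length ≤ q.length)
    {a b : α} (ha : a ∈ p.support) (hb : b ∈ p.support) (hadj : Γ.Adj a b)
    (hne : s(a, b) ∉ p.edges)
    (hlt : (p.takeUntil a ha).length < (p.takeUntil b hb).length) : False := by
  have hga : p.getVert (p.takeUntil a ha).length = a := getVert_length_takeUntil p ha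
  have hgb : p.getVert (p.takeUntil b hb).length = b := getVert_length_takeUntil p hb
  have hibL : (p.takeUntil b hb).length + (p.dropUntil b hb).length = p.length :=
    length_takeUntil_add p hb
  have hne2 : (p.takeUntil b hb).length ≠ (p.takeUntil a ha).length + 1 := by
    intro hEq
    apply hne
    have hlt2 : (p.takeUntil a ha).length < p.length := by omega
    have := edge_getVert_succ_mem_edges p _ hlt2
    rwa [hga, ← hEq, hgb] at this
  set q := (p.takeUntil a ha).append (Walk.cons hadj (p.dropUntil b hb)) with hq
  have hqB : ∀ z ∈ q.support, z ∈ B := by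
    intro z hz
    rw [hq, Walk.mem_support_append_iff] at hz
    rcases hz with h | h
    · exact hpB z (p.support_takeUntil_subset ha h)
    · rw [Walk.support_cons] at h
      rcases List.mem_cons.mp h with rfl | h
      · exact hpB z ha
      · exact hpB z (p.support_dropUntil_subset hb h)
  have hql : q.length = (p.takeUntil a ha).length + ((p.dropUntil b hb).length + 1) := by
    rw [hq, Walk.length_append, Walk.length_cons]
  have := hmin q hqB
  omega

lemma reachOn_neighborhood {A : Finset α} [DecidableRel Γ.Adj] (hA : ChordalOn Γ A)
    {v : α} (hv : v ∈ A) :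
    ∀ n : ℕ, ∀ x y : α, x ∈ A.filter (fun u => Γ.Adj v u) → y ∈ A.filter (fun u => Γ.Adj v u) →
      (∃ p : Γ.Walk x y, (∀ z ∈ p.support, z ∈ A.erase v) ∧ p.length ≤ n) →
      ReachOn Γ (A.filter (fun u => Γ.Adj v u)) x y := by
  intro n
  induction n using Nat.strong_induction_on with
  | _ n IH =>
  intro x y hx hy hw
  obtain ⟨p0, hp0, hp0n⟩ := hw
  set N := A.filter (fun u => Γ.Adj v u) with hN
  obtain ⟨p, hpB, hpath, hmin⟩ := exists_min_walk (Γ := Γ) ⟨p0, hp0⟩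
  have hplen : p.length ≤ n := le_trans (hmin p0 hp0) hp0n
  have hvx : Γ.Adj v x := (Finset.mem_filter.mp hx).2
  have hvy : Γ.Adj v y := (Finset.mem_filter.mp hy).2
  by_cases hxy : x = y
  · subst hxy; exact ReachOn.refl hx
  by_cases hadjxy : Γ.Adj x y
  · refine ⟨Walk.cons hadjxy Walk.nil, fun z hz => ?_⟩
    rw [Walk.support_cons, Walk.support_nil] at hz
    rcases List.mem_cons.mp hz with rfl | hz
    · exact hx
    · rw [List.mem_singleton] at hz; rwa [hz]
  have hlen0 : p.length ≠ 0 := fun h0 => hxy (Walk.eq_of_length_eq_zero h0)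
  have hlen1 : p.length ≠ 1 := by
    intro h1
    have h01 : (0 : ℕ) < p.length := by omega
    have hadj01 := p.adj_getVert_succ h01
    rw [Walk.getVert_zero] at hadj01
    have h1v : p.getVert 1 = y := by rw [← h1, Walk.getVert_length]
    exact hadjxy (by rwa [h1v] at hadj01)
  have h2 : 2 ≤ p.length := by omega
  have hvmemp : v ∉ p.support := fun hmem => (Finset.mem_erase.mp (hpB v hmem)).1 rfl
  have hyv : Γ.Adj y v := hvy.symm
  set P := p.append (Walk.cons hyv Walk.nil) with hP
  have hPsupp : P.support = p.support ++ [v] := by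
    rw [hP, Walk.support_append]; simp
  have hPpath : P.IsPath := by
    rw [Walk.isPath_def, hPsupp]
    rw [List.nodup_append]
    refine ⟨hpath.support_nodup, List.nodup_singleton v, ?_⟩
    intro z hz w hw hzw
    rw [List.mem_singleton] at hw
    rw [hzw, hw] at hz
    exact hvmemp hz
  have hPedges : P.edges = p.edges ++ [s(y, v)] := by
    rw [hP, Walk.edges_append]; simp
  have hsvx : s(v, x) ∉ P.edges := by
    rw [hPedges]
    intro hmem
    rcases List.mem_append.mp hmem with h | h
    · exact hvmemp (p.fst_mem_support_of_mem_edges h)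
    · rw [List.mem_singleton, Sym2.eq_iff] at h
      rcases h with ⟨hv1, _⟩ | ⟨_, hx1⟩
      · exact hyv.ne' hv1
      · exact hxy hx1
  set c := Walk.cons hvx P with hc
  have hcyc : c.IsCycle := (Walk.cons_isCycle_iff P hvx).mpr ⟨hPpath, hsvx⟩
  have hclen : 4 ≤ c.length := by
    rw [hc, Walk.length_cons, hP, Walk.length_append, Walk.length_cons, Walk.length_nil]
    omega
  have hcsupp : ∀ z ∈ c.support, z ∈ A := by
    intro z hz
    rw [hc, Walk.support_cons] at hz
    rcases List.mem_cons.mp hz with rfl | hz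
    · exact hv
    · rw [hPsupp] at hz
      rcases List.mem_append.mp hz with hz | hz
      · exact Finset.mem_of_mem_erase (hpB z hz)
      · rw [List.mem_singleton] at hz; rwa [hz]
  obtain ⟨a, b, hca, hcb, hab, hnab⟩ := hA v c hcyc hclen hcsupp
  have hmemc : ∀ z, z ∈ c.support ↔ z = v ∨ z ∈ p.support := by
    intro z
    rw [hc, Walk.support_cons, hPsupp]
    constructor
    · intro hz
      rcases List.mem_cons.mp hz with rfl | hz
      · exact Or.inl rfl
      · rcases List.mem_append.mp hz with hz | hz
        · exact Or.inr hz
        · rw [List.mem_singleton] at hz; exact Or.inl hz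
    · rintro (rfl | hz)
      · exact List.mem_cons_self
      · exact List.mem_cons_of_mem _ (List.mem_append_left _ hz)
  have hcedges : c.edges = s(v, x) :: (p.edges ++ [s(y, v)]) := by
    rw [hc, Walk.edges_cons, hPedges]
  have main : ∀ b', ∀ hb' : b' ∈ p.support, Γ.Adj v b' → s(v, b') ∉ c.edges →
      ReachOn Γ N x y := by
    intro b' hb' hvb' hnb'
    have hb'N : b' ∈ N := Finset.mem_filter.mpr
      ⟨Finset.mem_of_mem_erase (hpB b' hb'), hvb'⟩
    have hb'x : b' ≠ x := by
      rintro rfl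
      exact hnb' (by rw [hcedges]; exact List.mem_cons_self)
    have hb'y : b' ≠ y := by
      rintro rfl
      apply hnb'
      rw [hcedges]
      exact List.mem_cons_of_mem _
        (List.mem_append_right _ (List.mem_singleton.mpr Sym2.eq_swap))
    have hsum : (p.takeUntil b' hb').length + (p.dropUntil b' hb').length = p.length :=
      length_takeUntil_add p hb'
    have htpos : (p.takeUntil b' hb').length ≠ 0 := by
      intro h0
      exact hb'x (Walk.eq_of_length_eq_zero h0).symm
    have hdpos : (p.dropUntil b' hb').length ≠ 0 := by
      intro h0
      exact hb'y (Walk.eq_of_length_eq_zero h0)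
    have r1 : ReachOn Γ N x b' := IH (p.takeUntil b' hb').length (by omega) x b' hx hb'N
      ⟨p.takeUntil b' hb', fun z hz => hpB z (p.support_takeUntil_subset hb' hz), le_rfl⟩
    have r2 : ReachOn Γ N b' y := IH (p.dropUntil b' hb').length (by omega) b' y hb'N hy
      ⟨p.dropUntil b' hb', fun z hz => hpB z (p.support_dropUntil_subset hb' hz), le_rfl⟩
    exact r1.trans r2
  rcases (hmemc a).mp hca with rfl | hap
  · rcases (hmemc b).mp hcb with rfl | hbp
    · exact absurd hab (Γ.irrefl)
    · exact main b hbp hab hnab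
  · rcases (hmemc b).mp hcb with rfl | hbp
    · refine main a hap hab.symm ?_
      rw [Sym2.eq_swap]
      exact hnab
    · exfalso
      have hnep : s(a, b) ∉ p.edges := by
        intro h
        exact hnab (by
          rw [hcedges]
          exact List.mem_cons_of_mem _ (List.mem_append_left _ h))
      rcases lt_trichotomy (p.takeUntil a hap).length (p.takeUntil b hbp).length with
        hlt | heq | hgt
      · exact no_shortcut hpB hmin hap hbp hab hnep hlt
      · have h1 := getVert_length_takeUntil p hap
        have h2' := getVert_length_takeUntil p hbp
        rw [heq, h2'] at h1
        exact hab.ne h1.symm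
      · refine no_shortcut hpB hmin hbp hap hab.symm ?_ hgt
        rw [Sym2.eq_swap]
        exact hnep

lemma reachOn_filter_adj {A : Finset α} [DecidableRel Γ.Adj] (hA : ChordalOn Γ A)
    {v : α} (hv : v ∈ A) {x y : α}
    (hx : x ∈ A.filter (fun u => Γ.Adj v u)) (hy : y ∈ A.filter (fun u => Γ.Adj v u))
    (h : ReachOn Γ (A.erase v) x y) :
    ReachOn Γ (A.filter (fun u => Γ.Adj v u)) x y := by
  obtain ⟨p, hp⟩ := h
  exact reachOn_neighborhood hA hv p.length x y hx hy ⟨p, hp, le_rfl⟩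

lemma exists_noncut {A : Finset α} (hconn : ConnOn Γ A) (h2 : 2 ≤ A.card) :
    ∃ v ∈ A, (A.erase v).Nonempty ∧ ConnOn Γ (A.erase v) := by
  obtain ⟨u, hu⟩ := Finset.card_pos.mp (show 0 < A.card by omega)
  set dd : α → ℕ := fun x =>
    sInf {n | ∃ p : Γ.Walk u x, (∀ z ∈ p.support, z ∈ A) ∧ p.length = n} with hdd
  have hdmem : ∀ x ∈ A, ∃ p : Γ.Walk u x, (∀ z ∈ p.support, z ∈ A) ∧ p.length = dd x := by
    intro x hx
    have hne : {n | ∃ p : Γ.Walk u x, (∀ z ∈ p.support, z ∈ A) ∧ p.length = n}.Nonempty := by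
      obtain ⟨p, hp⟩ := hconn u hu x hx
      exact ⟨p.length, p, hp, rfl⟩
    exact Nat.sInf_mem hne
  have hdle : ∀ x, ∀ p : Γ.Walk u x, (∀ z ∈ p.support, z ∈ A) → dd x ≤ p.length :=
    fun x p hp => Nat.sInf_le ⟨p, hp, rfl⟩
  obtain ⟨v, hvA, hvmax⟩ := A.exists_max_image dd ⟨u, hu⟩
  have hdu : dd u = 0 := Nat.le_zero.mp (hdle u Walk.nil (by
    intro z hz
    simp only [Walk.support_nil, List.mem_singleton] at hz
    rwa [hz]))
  have hvu : v ≠ u := by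
    obtain ⟨w, hwA, hwu⟩ := Finset.exists_mem_ne (show 1 < A.card by omega) u
    have hw1 : dd w ≠ 0 := by
      intro h0
      obtain ⟨p, hp, hplen⟩ := hdmem w hwA
      rw [h0] at hplen
      exact hwu (Walk.eq_of_length_eq_zero hplen).symm
    intro hvu0
    have := hvmax w hwA
    rw [hvu0, hdu] at this
    omega
  have hkey : ∀ x ∈ A.erase v, ReachOn Γ (A.erase v) u x := by
    intro x hx
    obtain ⟨hxv, hxA⟩ := Finset.mem_erase.mp hx
    obtain ⟨p, hp, hplen⟩ := hdmem x hxA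
    have hvp : v ∉ p.support := by
      intro hvp
      have h1 : dd v ≤ (p.takeUntil v hvp).length :=
        hdle v _ (fun z hz => hp z (p.support_takeUntil_subset hvp hz))
      have h2' : (p.takeUntil v hvp).length + (p.dropUntil v hvp).length = p.length :=
        length_takeUntil_add p hvp
      have h3 : (p.dropUntil v hvp).length ≠ 0 := by
        intro h0
        exact hxv (Walk.eq_of_length_eq_zero h0).symm
      have h4 := hvmax x hxA
      omega
    exact ⟨p, fun z hz => Finset.mem_erase.mpr ⟨fun h => hvp (h ▸ hz), hp z hz⟩⟩
  have huv : u ∈ A.erase v := Finset.mem_erase.mpr ⟨fun h => hvu h.symm, hu⟩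
  refine ⟨v, hvA, ⟨u, huv⟩, ?_⟩
  intro x hx y hy
  exact (hkey x hx).symm.trans (hkey y hy)

variable (Γ) [DecidableRel Γ.Adj]

/-- The alternating sum over nonempty cliques inside `A`. -/
def cliqueSum (A : Finset α) : ℤ :=
  ∑ C ∈ A.powerset.filter (fun C => C ≠ ∅ ∧ IsCompleteSet Γ C), (-1 : ℤ) ^ (C.card - 1)

lemma cliqueSum_singleton (a : α) : cliqueSum Γ {a} = 1 := by
  unfold cliqueSum
  have hfil : ({a} : Finset α).powerset.filter (fun C => C ≠ ∅ ∧ IsCompleteSet Γ C)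
      = {({a} : Finset α)} := by
    ext C
    simp only [Finset.mem_filter, Finset.mem_powerset, Finset.subset_singleton_iff,
      Finset.mem_singleton]
    constructor
    · rintro ⟨rfl | rfl, hne, _⟩
      · exact absurd rfl hne
      · rfl
    · rintro rfl
      refine ⟨Or.inr rfl, Finset.singleton_ne_empty a, ?_⟩
      intro u hu v hv huv
      rw [Finset.mem_singleton] at hu hv
      exact absurd (hu.trans hv.symm) huv
  rw [hfil, Finset.sum_singleton, Finset.card_singleton]
  norm_num

lemma cliqueSum_recursion {A : Finset α} {v : α} (hv : v ∈ A) :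
    cliqueSum Γ A = cliqueSum Γ (A.erase v)
      + (1 - cliqueSum Γ (A.filter (fun u => Γ.Adj v u))) := by
  classical
  set N := A.filter (fun u => Γ.Adj v u) with hN
  have hNA : N ⊆ A := Finset.filter_subset _ _
  have hvN : v ∉ N := by
    intro h
    exact Γ.irrefl (Finset.mem_filter.mp h).2
  have hsplit := Finset.sum_filter_add_sum_filter_not
    (A.powerset.filter (fun C => C ≠ ∅ ∧ IsCompleteSet Γ C)) (fun C => v ∈ C)
    (fun C => (-1 : ℤ) ^ (C.card - 1))
  have e2 : (A.powerset.filter (fun C => C ≠ ∅ ∧ IsCompleteSet Γ C)).filter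
      (fun C => v ∉ C) = (A.erase v).powerset.filter (fun C => C ≠ ∅ ∧ IsCompleteSet Γ C) := by
    ext C
    simp only [Finset.mem_filter, Finset.mem_powerset, Finset.subset_erase]
    tauto
  have e1 : ∑ C ∈ (A.powerset.filter (fun C => C ≠ ∅ ∧ IsCompleteSet Γ C)).filter
        (fun C => v ∈ C), (-1 : ℤ) ^ (C.card - 1)
      = ∑ S ∈ N.powerset.filter (fun S => IsCompleteSet Γ S), (-1 : ℤ) ^ S.card := by
    apply Finset.sum_nbij' (fun C => C.erase v) (fun S => insert v S)
    · intro C hC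
      simp only [Finset.mem_filter, Finset.mem_powerset] at hC ⊢
      obtain ⟨⟨hCA, _, hCcomp⟩, hvC⟩ := hC
      constructor
      · intro u hu
        obtain ⟨huv, huC⟩ := Finset.mem_erase.mp hu
        exact Finset.mem_filter.mpr ⟨hCA huC, hCcomp v hvC u huC (Ne.symm huv)⟩
      · intro u hu w hw huw
        exact hCcomp u (Finset.mem_of_mem_erase hu) w (Finset.mem_of_mem_erase hw) huw
    · intro S hS
      simp only [Finset.mem_filter, Finset.mem_powerset] at hS ⊢
      obtain ⟨hSN, hScomp⟩ := hS
      refine ⟨⟨?_, Finset.insert_ne_empty _ _, ?_⟩, Finset.mem_insert_self _ _⟩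
      · intro u hu
        rcases Finset.mem_insert.mp hu with rfl | hu
        · exact hv
        · exact hNA (hSN hu)
      · intro u hu w hw huw
        rcases Finset.mem_insert.mp hu with h | h
        · rcases Finset.mem_insert.mp hw with h' | h'
          · exact absurd (h.trans h'.symm) huw
          · rw [h]; exact (Finset.mem_filter.mp (hSN h')).2
        · rcases Finset.mem_insert.mp hw with h' | h'
          · rw [h']; exact ((Finset.mem_filter.mp (hSN h)).2).symm
          · exact hScomp u h w h' huw
    · intro C hC
      simp only [Finset.mem_filter] at hC
      exact Finset.insert_erase hC.2
    · intro S hS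
      simp only [Finset.mem_filter, Finset.mem_powerset] at hS
      exact Finset.erase_insert (fun h => hvN (hS.1 h))
    · intro C hC
      simp only [Finset.mem_filter] at hC
      rw [Finset.card_erase_of_mem hC.2]
  have e3 : ∑ S ∈ N.powerset.filter (fun S => IsCompleteSet Γ S), (-1 : ℤ) ^ S.card
      = 1 - cliqueSum Γ N := by
    have hmem : (∅ : Finset α) ∈ N.powerset.filter (fun S => IsCompleteSet Γ S) := by
      simp only [Finset.mem_filter, Finset.mem_powerset]
      exact ⟨Finset.empty_subset _, fun u hu => absurd hu (Finset.notMem_empty u)⟩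
    rw [← Finset.add_sum_erase _ _ hmem]
    have he : (N.powerset.filter (fun S => IsCompleteSet Γ S)).erase ∅
        = N.powerset.filter (fun C => C ≠ ∅ ∧ IsCompleteSet Γ C) := by
      ext C
      simp only [Finset.mem_erase, Finset.mem_filter, Finset.mem_powerset]
      tauto
    rw [he, Finset.card_empty, pow_zero]
    have hterm : ∀ C ∈ N.powerset.filter (fun C => C ≠ ∅ ∧ IsCompleteSet Γ C),
        (-1 : ℤ) ^ C.card = -((-1 : ℤ) ^ (C.card - 1)) := by
      intro C hC
      have hCne : C ≠ ∅ := (Finset.mem_filter.mp hC).2.1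
      have hc1 : 1 ≤ C.card := Finset.one_le_card.mpr (Finset.nonempty_iff_ne_empty.mpr hCne)
      have hstep : C.card = (C.card - 1) + 1 := by omega
      have h2 : (-1 : ℤ) ^ C.card = (-1 : ℤ) ^ (C.card - 1) * (-1) := by
        conv_lhs => rw [hstep]
        rw [pow_succ]
      rw [h2]
      ring
    rw [Finset.sum_congr rfl hterm, Finset.sum_neg_distrib]
    unfold cliqueSum
    ring
  have e2' : ∑ C ∈ (A.powerset.filter (fun C => C ≠ ∅ ∧ IsCompleteSet Γ C)).filter
      (fun C => v ∉ C), (-1 : ℤ) ^ (C.card - 1) = cliqueSum Γ (A.erase v) := by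
    unfold cliqueSum
    rw [e2]
  have hA' : cliqueSum Γ A = ∑ C ∈ (A.powerset.filter
        (fun C => C ≠ ∅ ∧ IsCompleteSet Γ C)).filter (fun C => v ∈ C), (-1 : ℤ) ^ (C.card - 1)
      + ∑ C ∈ (A.powerset.filter (fun C => C ≠ ∅ ∧ IsCompleteSet Γ C)).filter
        (fun C => v ∉ C), (-1 : ℤ) ^ (C.card - 1) := by
    unfold cliqueSum
    rw [hsplit]
  rw [hA', e1, e3, e2']
  ring

lemma cliqueSum_eq_one :
    ∀ n (A : Finset α), A.card ≤ n → A.Nonempty → ConnOn Γ A → ChordalOn Γ A →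
      cliqueSum Γ A = 1 := by
  intro n
  induction n with
  | zero =>
    intro A h0 hA _ _
    have := Finset.one_le_card.mpr hA
    omega
  | succ n IH =>
    intro A hcard hA hconn hchord
    by_cases h1 : A.card = 1
    · obtain ⟨a, rfl⟩ := Finset.card_eq_one.mp h1
      exact cliqueSum_singleton Γ a
    · have h2 : 2 ≤ A.card := by
        have := Finset.one_le_card.mpr hA
        omega
      obtain ⟨v, hvA, herane, hconn'⟩ := exists_noncut hconn h2
      set N := A.filter (fun u => Γ.Adj v u) with hNdef
      have hNsub : N ⊆ A.erase v := by
        intro u hu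
        obtain ⟨huA, hadj⟩ := Finset.mem_filter.mp hu
        exact Finset.mem_erase.mpr ⟨hadj.ne', huA⟩
      have hNne : N.Nonempty := by
        obtain ⟨w, hwA, hwv⟩ := Finset.exists_mem_ne (show 1 < A.card by omega) v
        obtain ⟨p, hp⟩ := hconn v hvA w hwA
        cases p with
        | nil => exact absurd rfl hwv
        | cons h q =>
          refine ⟨_, Finset.mem_filter.mpr ⟨hp _ ?_, h⟩⟩
          rw [Walk.support_cons]
          exact List.mem_cons_of_mem _ q.start_mem_support
      have hcarde : (A.erase v).card ≤ n := by
        rw [Finset.card_erase_of_mem hvA]; omega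
      have hNcard : N.card ≤ n := le_trans (Finset.card_le_card hNsub) hcarde
      have hIH1 : cliqueSum Γ (A.erase v) = 1 :=
        IH _ hcarde herane hconn' (hchord.mono (Finset.erase_subset _ _))
      have hconnN : ConnOn Γ N := by
        intro x hx y hy
        exact reachOn_filter_adj hchord hvA hx hy (hconn' x (hNsub hx) y (hNsub hy))
      have hIH2 : cliqueSum Γ N = 1 :=
        IH _ hNcard hNne hconnN (hchord.mono (Finset.filter_subset _ _))
      rw [cliqueSum_recursion Γ hvA, hIH1, ← hNdef, hIH2]
      ring

variable {Γ}

/-- The homomorphism from an induced subgraph back to the ambient graph. -/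
def valHom (S : Set α) : Γ.induce S →g Γ :=
  ⟨Subtype.val, fun h => h⟩

lemma valHom_injective (S : Set α) : Function.Injective (valHom (Γ := Γ) S) :=
  Subtype.val_injective

/-- Lift a walk whose support lies in `S` to the induced subgraph on `S`. -/
def liftWalk {S : Set α} : ∀ {x y : α} (p : Γ.Walk x y), (∀ z ∈ p.support, z ∈ S) →
    ∀ (hx : x ∈ S) (hy : y ∈ S), (Γ.induce S).Walk ⟨x, hx⟩ ⟨y, hy⟩
  | _, _, Walk.nil, _, _, _ => Walk.nil
  | _, _, Walk.cons h q, hs, hx, hy =>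
    Walk.cons (by exact h)
      (liftWalk q
        (fun z hz => hs z (by rw [Walk.support_cons]; exact List.mem_cons_of_mem _ hz))
        (hs _ (by rw [Walk.support_cons]; exact List.mem_cons_of_mem _ q.start_mem_support))
        hy)

lemma liftWalk_map {S : Set α} : ∀ {x y : α} (p : Γ.Walk x y)
    (hs : ∀ z ∈ p.support, z ∈ S) (hx : x ∈ S) (hy : y ∈ S),
    (liftWalk p hs hx hy).map (valHom S) = p
  | _, _, Walk.nil, _, _, _ => rfl
  | _, _, Walk.cons h q, hs, hx, hy => by
    simp only [liftWalk, Walk.map_cons]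
    exact congrArg _ (liftWalk_map q _ _ _)

lemma connOn_of_induce_connected (S : Finset α) (h : (Γ.induce (S : Set α)).Connected) :
    ConnOn Γ S := by
  intro x hx y hy
  have hx' : x ∈ (S : Set α) := hx
  have hy' : y ∈ (S : Set α) := hy
  obtain ⟨w⟩ := h.preconnected ⟨x, hx'⟩ ⟨y, hy'⟩
  refine ⟨w.map (valHom (S : Set α)), fun z hz => ?_⟩
  erw [Walk.support_map] at hz
  obtain ⟨⟨z', hz'⟩, _, rfl⟩ := List.mem_map.mp hz
  exact hz'

lemma chordalOn_of_isChordal (S : Finset α) (h : IsChordal (Γ.induce (S : Set α))) :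
    ChordalOn Γ S := by
  intro v w hcyc hlen hsup
  have hv : v ∈ (S : Set α) := hsup v w.start_mem_support
  have hs : ∀ z ∈ w.support, z ∈ (S : Set α) := fun z hz => hsup z hz
  set w' := liftWalk w hs hv hv with hw'
  have hmap : w'.map (valHom (S : Set α)) = w := liftWalk_map w hs hv hv
  have hinj := valHom_injective (Γ := Γ) (S : Set α)
  have hcyc' : w'.IsCycle :=
    (Walk.map_isCycle_iff_of_injective hinj).mp (by rw [hmap]; exact hcyc)
  have hlen' : 4 ≤ w'.length := by
    erw [← hmap, Walk.length_map] at hlen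
    exact hlen
  obtain ⟨a, b, ha, hb, hadj, hne⟩ := h _ w' hcyc' hlen'
  refine ⟨a.val, b.val, ?_, ?_, hadj, ?_⟩
  · erw [← hmap, Walk.support_map]
    exact List.mem_map_of_mem ha
  · erw [← hmap, Walk.support_map]
    exact List.mem_map_of_mem hb
  · intro hmem
    erw [← hmap, Walk.edges_map] at hmem
    obtain ⟨e, he, hee⟩ := List.mem_map.mp hmem
    have hpair : Sym2.map (valHom (Γ := Γ) (S : Set α)) s(a, b) = s(a.val, b.val) :=
      Sym2.map_pair_eq _ _ _
    have : e = s(a, b) := Sym2.map.injective hinj (by rw [hee, hpair])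
    exact hne (this ▸ he)

end ChordalAux

open ChordalAux in
/-- If the subgraph induced on a nonempty `H ⊆ V` has exactly `l` connected components
`H⁽¹⁾,…,H⁽ˡ⁾` (encoded as a partition of `H` into nonempty pieces, each inducing a
connected subgraph, with no edges between distinct pieces) and each component induces a
chordal subgraph, then the alternating sum `Σ_C (−1)^{|C|−1}` over all nonempty complete
subsets `C ⊆ H` equals `l`; in particular if `l ≥ 2` it is not equal to 1. -/
theorem alternating_clique_sum_eq_card_components {V : Type} [Fintype V] [DecidableEq V]
    (G : SimpleGraph V) [DecidableRel G.Adj] (H : Finset V) (hH : H.Nonempty)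
    (l : ℕ) (Hc : Fin l → Finset V)
    (hne : ∀ j, (Hc j).Nonempty)
    (hdisj : ∀ j j', j ≠ j' → Disjoint (Hc j) (Hc j'))
    (hunion : H = Finset.univ.biUnion Hc)
    (hnoedge : ∀ j j', j ≠ j' → ∀ u ∈ Hc j, ∀ v ∈ Hc j', ¬ G.Adj u v)
    (hconn : ∀ j, (G.induce (Hc j : Set V)).Connected)
    (hchordal : ∀ j, IsChordal (G.induce (Hc j : Set V))) :
    (∑ C ∈ H.powerset.filter (fun C => C ≠ ∅ ∧ IsCompleteSet G C),
        (-1 : ℤ) ^ (C.card - 1) = (l : ℤ)) ∧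
      (2 ≤ l →
        ∑ C ∈ H.powerset.filter (fun C => C ≠ ∅ ∧ IsCompleteSet G C),
          (-1 : ℤ) ^ (C.card - 1) ≠ 1) := by
  classical
  have key : ∀ j, cliqueSum G (Hc j) = 1 := by
    intro j
    exact cliqueSum_eq_one G (Hc j).card (Hc j) le_rfl (hne j)
      (connOn_of_induce_connected (Hc j) (hconn j))
      (chordalOn_of_isChordal (Hc j) (hchordal j))
  have hfilter : H.powerset.filter (fun C => C ≠ ∅ ∧ IsCompleteSet G C)
      = Finset.univ.biUnion
        (fun j => (Hc j).powerset.filter (fun C => C ≠ ∅ ∧ IsCompleteSet G C)) := by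
    ext C
    simp only [Finset.mem_filter, Finset.mem_powerset, Finset.mem_biUnion, Finset.mem_univ,
      true_and]
    constructor
    · rintro ⟨hCH, hCne, hCcomp⟩
      obtain ⟨c, hc⟩ := Finset.nonempty_iff_ne_empty.mpr hCne
      have hcH : c ∈ H := hCH hc
      rw [hunion] at hcH
      obtain ⟨j, _, hcj⟩ := Finset.mem_biUnion.mp hcH
      refine ⟨j, ?_, hCne, hCcomp⟩
      intro u hu
      have huH : u ∈ H := hCH hu
      rw [hunion] at huH
      obtain ⟨j', _, huj'⟩ := Finset.mem_biUnion.mp huH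
      by_cases hjj : j' = j
      · rwa [hjj] at huj'
      · by_cases huc : u = c
        · exact absurd (Finset.disjoint_left.mp (hdisj j' j hjj) huj') (by
            rw [huc] at *
            exact fun hcontra => hcontra hcj)
        · exact absurd (hCcomp u hu c hc huc) (hnoedge j' j hjj u huj' c hcj)
    · rintro ⟨j, hCsub, hCne, hCcomp⟩
      refine ⟨?_, hCne, hCcomp⟩
      intro u hu
      rw [hunion]
      exact Finset.mem_biUnion.mpr ⟨j, Finset.mem_univ j, hCsub hu⟩
  have hdisj2 : ((Finset.univ : Finset (Fin l)) : Set (Fin l)).PairwiseDisjoint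
      (fun j => (Hc j).powerset.filter (fun C => C ≠ ∅ ∧ IsCompleteSet G C)) := by
    intro j _ j' _ hjj
    simp only [Function.onFun]
    rw [Finset.disjoint_left]
    intro C hC hC'
    have hCsub : C ⊆ Hc j := Finset.mem_powerset.mp (Finset.mem_filter.mp hC).1
    have hCsub' : C ⊆ Hc j' := Finset.mem_powerset.mp (Finset.mem_filter.mp hC').1
    have hCne : C ≠ ∅ := (Finset.mem_filter.mp hC).2.1
    obtain ⟨c, hc⟩ := Finset.nonempty_iff_ne_empty.mpr hCne
    exact Finset.disjoint_left.mp (hdisj j j' hjj) (hCsub hc) (hCsub' hc)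
  have hsum : ∑ C ∈ H.powerset.filter (fun C => C ≠ ∅ ∧ IsCompleteSet G C),
      (-1 : ℤ) ^ (C.card - 1) = (l : ℤ) := by
    rw [hfilter, Finset.sum_biUnion hdisj2]
    have : ∀ j : Fin l, ∑ C ∈ (Hc j).powerset.filter
        (fun C => C ≠ ∅ ∧ IsCompleteSet G C), (-1 : ℤ) ^ (C.card - 1) = 1 := key
    rw [Finset.sum_congr rfl (fun j _ => this j)]
    simp
  refine ⟨hsum, fun h2 h1 => ?_⟩
  rw [hsum] at h1
  have : l = 1 := by exact_mod_cast h1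
  omega
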